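/- The map T₄ : (ℂ \ {0})³ → (ℂ \ {0})³ defined by T₄(x,y,z) = (x·z, y·z⁻¹, z²) satisfies the tetrahedron equation T¹²³ ∘ T¹⁴⁵ ∘ T²⁴⁶ ∘ T³⁵⁶ = T³⁵⁶ ∘ T²⁴⁶ ∘ T¹⁴⁵ ∘ T¹²³, i.e. it is a tetrahedron map. Moreover T₄ is noninvolutive: there exists (x,y,z) ∈ (ℂ \ {0})³ with (T₄ ∘ T₄)(x,y,z) ≠ (x,y,z); indeed (T₄ ∘ T₄)(x,y,z) = (x·z³, y·z⁻³, z⁴) for all x,y,z. -/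
import Mathlib


section Tetra

variable {X : Type*}

/-- `T` acting on factors 1,2,3 of `X⁶`. -/
def lift123 (T : X × X × X → X × X × X) :
    X × X × X × X × X × X → X × X × X × X × X × X
  | (a, b, c, d, e, f) =>
    match T (a, b, c) with
    | (a', b', c') => (a', b', c', d, e, f)

/-- `T` acting on factors 1,4,5 of `X⁶`. -/
def lift145 (T : X × X × X → X × X × X) :
    X × X × X × X × X × X → X × X × X × X × X × X
  | (a, b, c, d, e, f) =>
    match T (a, d, e) with
    | (a', d', e') => (a', b, c, d', e', f)

/-- `T` acting on factors 2,4,6 of `X⁶`. -/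
def lift246 (T : X × X × X → X × X × X) :
    X × X × X × X × X × X → X × X × X × X × X × X
  | (a, b, c, d, e, f) =>
    match T (b, d, f) with
    | (b', d', f') => (a, b', c, d', e, f')

/-- `T` acting on factors 3,5,6 of `X⁶`. -/
def lift356 (T : X × X × X → X × X × X) :
    X × X × X × X × X × X → X × X × X × X × X × X
  | (a, b, c, d, e, f) =>
    match T (c, e, f) with
    | (c', e', f') => (a, b, c', d, e', f')

/-- The Zamolodchikov tetrahedron equation for a map `T : X³ → X³`. -/
def IsTetrahedronMap (T : X × X × X → X × X × X) : Prop :=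
  lift123 T ∘ lift145 T ∘ lift246 T ∘ lift356 T =
    lift356 T ∘ lift246 T ∘ lift145 T ∘ lift123 T

end Tetra

/-- The map `T₄(x,y,z) = (x·z, y·z⁻¹, z²)` on `(ℂ \ {0})³`. -/
def T4 : ℂˣ × ℂˣ × ℂˣ → ℂˣ × ℂˣ × ℂˣ :=
  fun (x, y, z) => (x * z, y * z⁻¹, z ^ 2)

theorem T4_isTetrahedronMap_noninvolutive :
    IsTetrahedronMap T4 ∧
    (∀ x y z : ℂˣ, (T4 ∘ T4) (x, y, z) = (x * z ^ 3, y * (z ^ 3)⁻¹, z ^ 4)) ∧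
    (∃ x y z : ℂˣ, (T4 ∘ T4) (x, y, z) ≠ (x, y, z)) := by
  refine ⟨?_, ?_, ?_⟩
  · funext p
    obtain ⟨a, b, c, d, e, f⟩ := p
    simp only [IsTetrahedronMap, Function.comp, lift123, lift145, lift246, lift356, T4]
    refine Prod.ext ?_ (Prod.ext ?_ (Prod.ext ?_ (Prod.ext ?_ (Prod.ext ?_ ?_))))
    all_goals rw [Units.ext_iff]
    all_goals push_cast
    all_goals try ring
    all_goals field_simp
    all_goals ring
  · intro x y z
    simp only [Function.comp, T4]
    refine Prod.ext ?_ (Prod.ext ?_ ?_)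
    all_goals rw [Units.ext_iff]
    all_goals push_cast
    all_goals try ring
    all_goals field_simp
    all_goals ring
  · refine ⟨1, 1, Units.mk0 2 two_ne_zero, fun h => ?_⟩
    have := congrArg (fun p => (p.2.2 : ℂ)) h
    simp [T4] at this
    norm_num at this
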